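/- Let v be a valuation on an algebraically closed field K̄ of residue characteristic p > 0 containing a primitive p-th root of unity ζ_p. Suppose h = q^p + ρ is a good part-p-th-power decomposition with t := v(ρ) − v(h) ≥ 0, let γ ∈ K̄^× have valuation v(γ) = min{t, p·v(p)/(p−1)} + v(h), and define q₀ = (1 − ζ_p)γ^{−1/p}q and ρ₀ = γ^{−1}ρ. Then all coefficients of q₀ and ρ₀ have valuation ≥ 0; moreover v(ρ₀) > 0 if and only if t > p·v(p)/(p−1), and v(q₀) > 0 if and only if t < p·v(p)/(p−1). -/

import Mathlib

open Polynomial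
open scoped Classical

/-- An additive ℚ-valued valuation on a field `K`, recorded as a bare function with
the valuation axioms imposed only at nonzero elements (the value at `0` is junk). -/
structure AddVal (K : Type*) [Field K] where
  v : K → ℚ
  map_one : v 1 = 0
  map_mul : ∀ x y : K, x ≠ 0 → y ≠ 0 → v (x * y) = v x + v y
  add_ge : ∀ x y : K, x ≠ 0 → y ≠ 0 → x + y ≠ 0 → min (v x) (v y) ≤ v (x + y)

variable {K : Type*} [Field K]

/-- The Gauss valuation of a polynomial: the minimum of the valuations of its
(nonzero) coefficients, with junk value `0` at the zero polynomial. -/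
noncomputable def AddVal.gauss (w : AddVal K) (h : K[X]) : ℚ :=
  if hh : h = 0 then 0
  else h.support.inf' (Polynomial.support_nonempty.mpr hh) fun i => w.v (h.coeff i)

/-- Gauss valuation valued in `ℚ ∪ {∞}`, taking the value `⊤` at the zero polynomial. -/
noncomputable def AddVal.gaussT (w : AddVal K) (h : K[X]) : WithTop ℚ :=
  if h = 0 then ⊤ else (w.gauss h : WithTop ℚ)

/-- The quantity `t = v(ρ) - v(h) ∈ ℚ ∪ {∞}` attached to a
part-`p`-th-power decomposition `h = q^p + ρ` (it is `⊤` when `ρ = 0`). -/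
noncomputable def AddVal.tdiff (w : AddVal K) (h ρ : K[X]) : WithTop ℚ :=
  if ρ = 0 then ⊤ else ((w.gauss ρ - w.gauss h : ℚ) : WithTop ℚ)

/-- `h = q ^ p + ρ` is a part-`p`-th-power decomposition (`deg q ≤ ⌊deg h / p⌋`). -/
def IsPartDecomp (p : ℕ) (h q ρ : K[X]) : Prop :=
  h = q ^ p + ρ ∧ q.natDegree ≤ h.natDegree / p

/-- The threshold `p·v(p)/(p-1)`. -/
noncomputable def pBound (w : AddVal K) (p : ℕ) : ℚ :=
  (p : ℚ) * w.v (p : K) / ((p : ℚ) - 1)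

/-- A part-`p`-th-power decomposition is good if `t ≥ p·v(p)/(p-1)` or if no
decomposition achieves a strictly larger value of `t = v(ρ) - v(h)`. -/
def IsGoodDecomp (w : AddVal K) (p : ℕ) (h q ρ : K[X]) : Prop :=
  IsPartDecomp p h q ρ ∧
    (((pBound w p : ℚ) : WithTop ℚ) ≤ w.tdiff h ρ ∨
      ∀ q₁ ρ₁ : K[X], IsPartDecomp p h q₁ ρ₁ → w.tdiff h ρ₁ ≤ w.tdiff h ρ)

namespace AddVal

variable (w : AddVal K)

noncomputable def vv (x : K) : WithTop ℚ := if x = 0 then ⊤ else (w.v x : WithTop ℚ)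

@[simp] lemma vv_zero : w.vv 0 = ⊤ := if_pos rfl

lemma vv_of_ne {x : K} (hx : x ≠ 0) : w.vv x = (w.v x : WithTop ℚ) := if_neg hx

lemma vv_ne_top {x : K} (hx : x ≠ 0) : w.vv x ≠ ⊤ := by
  rw [vv_of_ne w hx]; exact WithTop.coe_ne_top

@[simp] lemma vv_one : w.vv 1 = 0 := by
  rw [vv_of_ne w one_ne_zero, w.map_one]; rfl

lemma vv_mul (x y : K) : w.vv (x * y) = w.vv x + w.vv y := by
  by_cases hx : x = 0
  · simp [hx]
  by_cases hy : y = 0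
  · simp [hy]
  rw [vv_of_ne w hx, vv_of_ne w hy, vv_of_ne w (mul_ne_zero hx hy), w.map_mul x y hx hy]
  push_cast; rfl

lemma vv_add (x y : K) : min (w.vv x) (w.vv y) ≤ w.vv (x + y) := by
  by_cases hx : x = 0
  · simp [hx]
  by_cases hy : y = 0
  · simp [hy]
  by_cases hxy : x + y = 0
  · simp [hxy]
  rw [vv_of_ne w hx, vv_of_ne w hy, vv_of_ne w hxy, ← WithTop.coe_min, WithTop.coe_le_coe]
  exact w.add_ge x y hx hy hxy

lemma vv_pow (x : K) (n : ℕ) : w.vv (x ^ n) = n • w.vv x := by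
  induction n with
  | zero => simp
  | succ n ih => rw [pow_succ, vv_mul, ih, succ_nsmul]

lemma v_neg_one : w.v (-1 : K) = 0 := by
  have := w.map_mul (-1) (-1) (by norm_num) (by norm_num)
  rw [neg_mul_neg, one_mul, w.map_one] at this
  linarith

lemma vv_neg (x : K) : w.vv (-x) = w.vv x := by
  by_cases hx : x = 0
  · simp [hx]
  have : -x = -1 * x := by ring
  rw [this, vv_mul, vv_of_ne w (by norm_num), v_neg_one]
  simp

lemma vv_inv {x : K} (hx : x ≠ 0) : w.v x⁻¹ = - w.v x := by
  have := w.map_mul x x⁻¹ hx (inv_ne_zero hx)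
  rw [mul_inv_cancel₀ hx, w.map_one] at this
  linarith

lemma vv_sum {ι : Type*} (s : Finset ι) (f : ι → K) (c : WithTop ℚ)
    (hc : ∀ i ∈ s, c ≤ w.vv (f i)) : c ≤ w.vv (∑ i ∈ s, f i) := by
  induction s using Finset.induction_on with
  | empty => simp
  | insert _ _ hni ih =>
    rename_i a s
    rw [Finset.sum_insert hni]
    refine le_trans (le_min (hc a (Finset.mem_insert_self a s)) ?_) (vv_add w _ _)
    exact ih fun i hi => hc i (Finset.mem_insert_of_mem hi)

lemma vv_sum_lt {ι : Type*} (s : Finset ι) (f : ι → K) (c : WithTop ℚ) (hc : c < ⊤)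
    (h : ∀ i ∈ s, c < w.vv (f i)) : c < w.vv (∑ i ∈ s, f i) := by
  induction s using Finset.induction_on with
  | empty => simpa using hc
  | insert _ _ hni ih =>
    rename_i a s
    rw [Finset.sum_insert hni]
    refine lt_of_lt_of_le (lt_min (h a (Finset.mem_insert_self a s)) ?_) (vv_add w _ _)
    exact ih fun i hi => h i (Finset.mem_insert_of_mem hi)

lemma vv_add_eq_left {x y : K} (h : w.vv x < w.vv y) : w.vv (x + y) = w.vv x := by
  refine le_antisymm ?_ (le_trans (le_of_eq (min_eq_left h.le).symm) (vv_add w x y))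
  have h3 : min (w.vv (x + y)) (w.vv y) ≤ w.vv x := by
    calc min (w.vv (x + y)) (w.vv y) = min (w.vv (x + y)) (w.vv (-y)) := by rw [vv_neg]
    _ ≤ w.vv ((x + y) + (-y)) := vv_add w _ _
    _ = w.vv x := by ring_nf
  by_contra hlt
  push_neg at hlt
  exact absurd h3 (not_le.mpr (lt_min hlt h))

noncomputable def W (f : K[X]) : WithTop ℚ := f.support.inf fun i => w.vv (f.coeff i)

lemma W_le (f : K[X]) (i : ℕ) : w.W f ≤ w.vv (f.coeff i) := by
  by_cases hi : i ∈ f.support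
  · exact Finset.inf_le hi
  · rw [Polynomial.notMem_support_iff.mp hi]; simp

lemma le_W {f : K[X]} {c : WithTop ℚ} (hc : ∀ i, c ≤ w.vv (f.coeff i)) : c ≤ w.W f :=
  Finset.le_inf fun i _ => hc i

@[simp] lemma W_zero : w.W 0 = ⊤ := by simp [W]

lemma W_lt_top {f : K[X]} (hf : f ≠ 0) : w.W f < ⊤ := by
  obtain ⟨i, hi⟩ := Polynomial.support_nonempty.mpr hf
  refine lt_of_le_of_lt (W_le w f i) ?_
  rw [vv_of_ne w (Polynomial.mem_support_iff.mp hi)]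
  exact WithTop.coe_lt_top _

lemma W_gaussT (f : K[X]) : w.gaussT f = w.W f := by
  by_cases hf : f = 0
  · simp [hf, gaussT]
  rw [gaussT, if_neg hf, gauss, dif_neg hf]
  refine le_antisymm (le_W w fun i => ?_) ?_
  · by_cases hi : f.coeff i = 0
    · simp [hi]
    rw [vv_of_ne w hi, WithTop.coe_le_coe]
    exact Finset.inf'_le _ (Polynomial.mem_support_iff.mpr hi)
  · obtain ⟨i, hi, hg⟩ := Finset.exists_mem_eq_inf' (Polynomial.support_nonempty.mpr hf)
      (fun i => w.v (f.coeff i))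
    rw [hg]
    refine le_trans (W_le w f i) ?_
    rw [vv_of_ne w (Polynomial.mem_support_iff.mp hi)]

lemma W_C (c : K) : w.W (C c) = w.vv c := by
  by_cases hc : c = 0
  · simp [hc]
  refine le_antisymm ?_ (le_W w fun i => ?_)
  · refine le_trans (W_le w _ 0) ?_
    rw [Polynomial.coeff_C_zero]
  · rw [Polynomial.coeff_C]
    split
    · exact le_refl _
    · simp

lemma W_add (f g : K[X]) : min (w.W f) (w.W g) ≤ w.W (f + g) := by
  refine le_W w fun i => ?_
  rw [Polynomial.coeff_add]
  exact le_trans (min_le_min (W_le w f i) (W_le w g i)) (vv_add w _ _)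

lemma W_neg (f : K[X]) : w.W (-f) = w.W f := by
  refine le_antisymm (le_W w fun i => ?_) (le_W w fun i => ?_)
  · rw [← vv_neg w, ← Polynomial.coeff_neg]
    exact W_le w (-f) i
  · rw [Polynomial.coeff_neg, vv_neg]
    exact W_le w f i

lemma W_add_eq_left {f g : K[X]} (h : w.W f < w.W g) : w.W (f + g) = w.W f := by
  refine le_antisymm ?_ (le_trans (le_of_eq (min_eq_left h.le).symm) (W_add w f g))
  have h3 : min (w.W (f + g)) (w.W g) ≤ w.W f := by
    calc min (w.W (f + g)) (w.W g) = min (w.W (f + g)) (w.W (-g)) := by rw [W_neg]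
    _ ≤ w.W ((f + g) + (-g)) := W_add w _ _
    _ = w.W f := by ring_nf
  by_contra hlt
  push_neg at hlt
  exact absurd h3 (not_le.mpr (lt_min hlt h))

lemma coe_add_lt {a b : ℚ} {x y : WithTop ℚ} (hx : (a : WithTop ℚ) < x)
    (hy : (b : WithTop ℚ) ≤ y) : ((a + b : ℚ) : WithTop ℚ) < x + y := by
  rcases eq_or_ne x ⊤ with rfl | hx'
  · rw [top_add]; exact WithTop.coe_lt_top _
  rcases eq_or_ne y ⊤ with rfl | hy'
  · rw [add_top]; exact WithTop.coe_lt_top _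
  lift x to ℚ using hx'
  lift y to ℚ using hy'
  rw [← WithTop.coe_add, WithTop.coe_lt_coe]
  exact add_lt_add_of_lt_of_le (WithTop.coe_lt_coe.mp hx) (WithTop.coe_le_coe.mp hy)

lemma W_mul (f g : K[X]) : w.W (f * g) = w.W f + w.W g := by
  by_cases hf : f = 0
  · simp [hf]
  by_cases hg : g = 0
  · simp [hg]
  refine le_antisymm ?_ ?_
  swap
  · refine le_W w fun n => ?_
    rw [Polynomial.coeff_mul]
    refine vv_sum w _ _ _ fun x _ => ?_
    rw [vv_mul]
    exact add_le_add (W_le w f x.1) (W_le w g x.2)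
  -- pick minimal indices achieving the inf
  obtain ⟨af, haf⟩ := WithTop.ne_top_iff_exists.mp (W_lt_top w hf).ne
  obtain ⟨ag, hag⟩ := WithTop.ne_top_iff_exists.mp (W_lt_top w hg).ne
  have hAf : (f.support.filter fun i => w.vv (f.coeff i) = w.W f).Nonempty := by
    obtain ⟨i, hi, hval⟩ := Finset.exists_mem_eq_inf' (Polynomial.support_nonempty.mpr hf)
      (fun i => w.vv (f.coeff i))
    refine ⟨i, Finset.mem_filter.mpr ⟨hi, ?_⟩⟩
    rw [W, ← Finset.inf'_eq_inf (Polynomial.support_nonempty.mpr hf), hval]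
  have hAg : (g.support.filter fun i => w.vv (g.coeff i) = w.W g).Nonempty := by
    obtain ⟨i, hi, hval⟩ := Finset.exists_mem_eq_inf' (Polynomial.support_nonempty.mpr hg)
      (fun i => w.vv (g.coeff i))
    refine ⟨i, Finset.mem_filter.mpr ⟨hi, ?_⟩⟩
    rw [W, ← Finset.inf'_eq_inf (Polynomial.support_nonempty.mpr hg), hval]
  set i := (f.support.filter fun i => w.vv (f.coeff i) = w.W f).min' hAf with hi_def
  set j := (g.support.filter fun i => w.vv (g.coeff i) = w.W g).min' hAg with hj_def
  have hif : w.vv (f.coeff i) = w.W f :=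
    (Finset.mem_filter.mp ((f.support.filter _).min'_mem hAf)).2
  have hjg : w.vv (g.coeff j) = w.W g :=
    (Finset.mem_filter.mp ((g.support.filter _).min'_mem hAg)).2
  have hfk : ∀ k, k < i → w.W f < w.vv (f.coeff k) := by
    intro k hk
    refine lt_of_le_of_ne (W_le w f k) fun he => ?_
    have hk0 : f.coeff k ≠ 0 := by
      intro h0
      rw [h0, vv_zero] at he
      exact (W_lt_top w hf).ne he
    have : k ∈ f.support.filter fun i => w.vv (f.coeff i) = w.W f :=
      Finset.mem_filter.mpr ⟨Polynomial.mem_support_iff.mpr hk0, he.symm⟩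
    exact absurd (Finset.min'_le _ k this) (not_le.mpr hk)
  have hgl : ∀ l, l < j → w.W g < w.vv (g.coeff l) := by
    intro l hl
    refine lt_of_le_of_ne (W_le w g l) fun he => ?_
    have hl0 : g.coeff l ≠ 0 := by
      intro h0
      rw [h0, vv_zero] at he
      exact (W_lt_top w hg).ne he
    have : l ∈ g.support.filter fun i => w.vv (g.coeff i) = w.W g :=
      Finset.mem_filter.mpr ⟨Polynomial.mem_support_iff.mpr hl0, he.symm⟩
    exact absurd (Finset.min'_le _ l this) (not_le.mpr hl)
  have key : w.vv ((f * g).coeff (i + j)) = w.W f + w.W g := by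
    rw [Polynomial.coeff_mul]
    have hmem : (i, j) ∈ Finset.HasAntidiagonal.antidiagonal (i + j) := by
      rw [Finset.HasAntidiagonal.mem_antidiagonal]
    rw [← Finset.add_sum_erase _ _ hmem]
    have hrest : w.vv (f.coeff i * g.coeff j) <
        w.vv (∑ x ∈ (Finset.HasAntidiagonal.antidiagonal (i + j)).erase (i, j), f.coeff x.1 * g.coeff x.2) := by
      rw [vv_mul, hif, hjg, ← haf, ← hag, ← WithTop.coe_add]
      refine vv_sum_lt w _ _ _ (WithTop.coe_lt_top _) fun x hx => ?_
      obtain ⟨hne, hx⟩ := Finset.mem_erase.mp hx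
      rw [Finset.HasAntidiagonal.mem_antidiagonal] at hx
      rw [vv_mul]
      rcases lt_or_ge x.1 i with hlt | hge
      · refine coe_add_lt ?_ ?_
        · rw [haf]; exact hfk x.1 hlt
        · rw [hag]; exact W_le w g x.2
      · have hx1 : i < x.1 := by
          rcases lt_or_eq_of_le hge with h' | h'
          · exact h'
          · exfalso
            apply hne
            have : x.2 = j := by omega
            exact Prod.ext h'.symm this
        have hx2 : x.2 < j := by omega
        rw [add_comm af ag, add_comm (w.vv (f.coeff x.1))]
        refine coe_add_lt ?_ ?_
        · rw [hag]; exact hgl x.2 hx2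
        · rw [haf]; exact W_le w f x.1
    rw [vv_add_eq_left w hrest, vv_mul, hif, hjg]
  rw [← key]
  exact W_le w _ _

lemma W_pow (f : K[X]) (n : ℕ) : w.W (f ^ n) = n • w.W f := by
  induction n with
  | zero => rw [pow_zero, ← Polynomial.C_1, W_C, vv_one, zero_smul]
  | succ n ih => rw [pow_succ, W_mul, ih, succ_nsmul]

lemma coe_nsmul (n : ℕ) (a : ℚ) : n • (a : WithTop ℚ) = ((n * a : ℚ) : WithTop ℚ) := by
  induction n with
  | zero => simp
  | succ n ih => rw [succ_nsmul, ih, ← WithTop.coe_add, WithTop.coe_inj]; push_cast; ring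

lemma vv_zeta {p : ℕ} (hp : 0 < p) {ζ : K} (hζ : ζ ^ p = 1) : w.vv ζ = 0 := by
  have hz : ζ ≠ 0 := by
    intro h0
    rw [h0, zero_pow hp.ne'] at hζ
    exact one_ne_zero hζ.symm
  have h1 : w.vv (ζ ^ p) = 0 := by rw [hζ, vv_one]
  rw [vv_pow, vv_of_ne w hz, coe_nsmul] at h1
  rw [vv_of_ne w hz]
  have : (p : ℚ) * w.v ζ = 0 := by exact_mod_cast h1
  have hp' : (p : ℚ) ≠ 0 := Nat.cast_ne_zero.mpr hp.ne'
  have hv : w.v ζ = 0 := by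
    rcases mul_eq_zero.mp this with h | h
    · exact absurd h hp'
    · exact h
  rw [hv]; rfl

lemma one_sub_pow_ge {ξ : K} (hξ : w.vv ξ = 0) (n : ℕ) :
    w.vv (1 - ξ) ≤ w.vv (1 - ξ ^ n) := by
  have hgeom : 1 - ξ ^ n = (∑ i ∈ Finset.range n, ξ ^ i) * (1 - ξ) := by
    have := geom_sum_mul ξ n
    have h2 : (∑ i ∈ Finset.range n, ξ ^ i) * (1 - ξ) = -((∑ i ∈ Finset.range n, ξ ^ i) * (ξ - 1)) := by ring
    rw [h2, this]; ring
  rw [hgeom, vv_mul]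
  refine le_add_of_nonneg_left ?_
  refine vv_sum w _ _ _ fun i _ => ?_
  rw [vv_pow, hξ, smul_zero]

lemma vv_prod {ι : Type*} (s : Finset ι) (f : ι → K) :
    w.vv (∏ i ∈ s, f i) = ∑ i ∈ s, w.vv (f i) := by
  induction s using Finset.induction_on with
  | empty => simp
  | insert _ _ hni ih =>
    rename_i a s
    rw [Finset.prod_insert hni, Finset.sum_insert hni, vv_mul, ih]

lemma prod_one_sub_zeta {p : ℕ} (hp : p.Prime) {ζ : K} (hζ : IsPrimitiveRoot ζ p) :
    (∏ i ∈ (Finset.range p).erase 0, (1 - ζ ^ i)) = (p : K) := by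
  have h0 : (0 : ℕ) ∈ Finset.range p := Finset.mem_range.mpr hp.pos
  have hX : (X : K[X]) ^ p - C 1 = ∏ i ∈ Finset.range p, (X - C (ζ ^ i * 1)) :=
    X_pow_sub_C_eq_prod hζ hp.pos (one_pow p)
  simp only [mul_one] at hX
  rw [← Finset.mul_prod_erase _ _ h0] at hX
  simp only [pow_zero, Polynomial.C_1] at hX
  have hXone : (X - 1 : K[X]) ≠ 0 := by
    have := Polynomial.X_sub_C_ne_zero (1 : K)
    simpa using this
  have hgeo : (X : K[X]) ^ p - 1 = (X - 1) * ∑ i ∈ Finset.range p, (X : K[X]) ^ i := by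
    have hg := geom_sum_mul (X : K[X]) p
    rw [← hg]; ring
  have hcancel : (∏ i ∈ (Finset.range p).erase 0, (X - C (ζ ^ i))) =
      ∑ i ∈ Finset.range p, (X : K[X]) ^ i :=
    mul_left_cancel₀ hXone (by rw [← hX, hgeo])
  have heval := congrArg (Polynomial.eval 1) hcancel
  simpa [Polynomial.eval_prod, Polynomial.eval_finset_sum] using heval

lemma v_one_sub_zeta [CharZero K] {p : ℕ} (hp : p.Prime) {ζ : K}
    (hζ : IsPrimitiveRoot ζ p) : w.v (1 - ζ) = w.v (p : K) / ((p : ℚ) - 1) := by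
  have hζ1 : ζ ≠ 1 := hζ.ne_one hp.one_lt
  have hsub : (1 : K) - ζ ≠ 0 := sub_ne_zero_of_ne hζ1.symm
  have h0 : (0 : ℕ) ∈ Finset.range p := Finset.mem_range.mpr hp.pos
  have hfac : ∀ i ∈ (Finset.range p).erase 0, w.vv (1 - ζ ^ i) = w.vv (1 - ζ) := by
    intro i hi
    obtain ⟨hi0, hiR⟩ := Finset.mem_erase.mp hi
    rw [Finset.mem_range] at hiR
    have hcop : i.Coprime p := Nat.Coprime.symm (hp.coprime_iff_not_dvd.mpr (by
      intro hdvd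
      exact absurd (Nat.le_of_dvd (Nat.pos_of_ne_zero hi0) hdvd) (not_le.mpr hiR)))
    have hprim : IsPrimitiveRoot (ζ ^ i) p := hζ.pow_of_coprime i hcop
    haveI : NeZero p := ⟨hp.ne_zero⟩
    obtain ⟨k, -, hk⟩ := hprim.eq_pow_of_pow_eq_one hζ.pow_eq_one
    refine le_antisymm ?_ (one_sub_pow_ge w (vv_zeta w hp.pos hζ.pow_eq_one) i)
    have hle := one_sub_pow_ge w (vv_zeta w hp.pos hprim.pow_eq_one) k
    rw [hk] at hle
    exact hle
  have hvp : w.vv (p : K) = (p - 1 : ℕ) • w.vv (1 - ζ) := by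
    rw [← prod_one_sub_zeta hp hζ, vv_prod, Finset.sum_congr rfl hfac, Finset.sum_const,
      Finset.card_erase_of_mem h0, Finset.card_range]
  have hpK : (p : K) ≠ 0 := Nat.cast_ne_zero.mpr hp.ne_zero
  rw [vv_of_ne w hpK, vv_of_ne w hsub, coe_nsmul] at hvp
  have h2 : w.v (p : K) = ((p - 1 : ℕ) : ℚ) * w.v (1 - ζ) := by exact_mod_cast hvp
  have hcast : ((p - 1 : ℕ) : ℚ) = (p : ℚ) - 1 := by
    rw [Nat.cast_sub hp.one_lt.le]; norm_num
  have hne : (p : ℚ) - 1 ≠ 0 := by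
    have h1 : (1 : ℚ) < (p : ℚ) := by exact_mod_cast hp.one_lt
    linarith
  rw [h2, hcast, mul_comm, mul_div_assoc, div_self hne, mul_one]

lemma rarith {B vh g : ℚ} (ht : 0 ≤ g - vh) :
    0 ≤ -(min (g - vh) B + vh) + g ∧
      (0 < -(min (g - vh) B + vh) + g ↔ B < g - vh) := by
  have he : -(min (g - vh) B + vh) + g = (g - vh) - min (g - vh) B := by ring
  rw [he]
  refine ⟨by linarith [min_le_left (g - vh) B], ?_, ?_⟩
  · intro hlt
    by_contra hnot
    push_neg at hnot
    rw [min_eq_left hnot] at hlt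
    linarith
  · intro hlt
    rw [min_eq_right hlt.le]
    linarith [min_le_left (g - vh) B]

lemma qarith {pq B vh g a : ℚ} (hp : 0 < pq) (hB : 0 < B) (ht : 0 ≤ g - vh)
    (h1 : vh ≤ pq * a) (h2 : 0 < g - vh → pq * a = vh) :
    0 ≤ B / pq - (min (g - vh) B + vh) / pq + a ∧
      (0 < B / pq - (min (g - vh) B + vh) / pq + a ↔ g - vh < B) := by
  have hval : B / pq - (min (g - vh) B + vh) / pq + a
      = (B - min (g - vh) B - vh + pq * a) / pq := by
    field_simp
    ring
  rcases eq_or_lt_of_le ht with h0 | h0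
  · have hm : min (g - vh) B = g - vh := min_eq_left (by linarith)
    rw [hval, hm, ← h0]
    refine ⟨div_nonneg (by linarith) hp.le, ?_, ?_⟩
    · intro _; linarith
    · intro _
      refine div_pos (by linarith) hp
  · have hpa := h2 h0
    rw [hval, hpa, show B - min (g - vh) B - vh + vh = B - min (g - vh) B from by ring]
    refine ⟨div_nonneg (by linarith [min_le_right (g - vh) B]) hp.le, ?_, ?_⟩
    · intro hlt
      by_contra hnot
      push_neg at hnot
      rw [min_eq_right hnot] at hlt
      simp [sub_self] at hlt
    · intro hlt
      rw [min_eq_left hlt.le]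
      exact div_pos (by linarith) hp

end AddVal

/-- Proposition 5.11(a),(b)(i),(ii): in residue characteristic `p`, given
a good part-`p`-th-power decomposition `h = q^p + ρ` with `t = v(ρ) - v(h) ≥ 0`, a
scalar `γ` with `v(γ) = min{t, p·v(p)/(p-1)} + v(h)` and a `p`-th root `δ` of `γ`, the
polynomials `q₀ = (1 - ζ_p)·γ^{-1/p}·q` and `ρ₀ = γ^{-1}·ρ` have all coefficients of
valuation `≥ 0`; moreover `v(ρ₀) > 0` iff `t > p·v(p)/(p-1)`, and `v(q₀) > 0` iff
`t < p·v(p)/(p-1)`. -/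


theorem statement19 {K : Type*} [Field K] [CharZero K] (w : AddVal K) (p : ℕ)
    (hp : p.Prime) (ζ : K) (hζ : IsPrimitiveRoot ζ p) (hvp : 0 < w.v (p : K))
    (h q ρ : K[X]) (hh : h ≠ 0) (hgood : IsGoodDecomp w p h q ρ)
    (ht0 : (0 : WithTop ℚ) ≤ w.tdiff h ρ)
    (γ δ : K) (hγ : γ ≠ 0) (hδ : δ ^ p = γ)
    (hvγ : w.v γ =
      (if ρ = 0 then pBound w p else min (w.gauss ρ - w.gauss h) (pBound w p))
        + w.gauss h) :
    (0 : WithTop ℚ) ≤ w.gaussT (C ((1 - ζ) * δ⁻¹) * q) ∧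
    (0 : WithTop ℚ) ≤ w.gaussT (C γ⁻¹ * ρ) ∧
    ((0 : WithTop ℚ) < w.gaussT (C γ⁻¹ * ρ) ↔
      ((pBound w p : ℚ) : WithTop ℚ) < w.tdiff h ρ) ∧
    ((0 : WithTop ℚ) < w.gaussT (C ((1 - ζ) * δ⁻¹) * q) ↔
      w.tdiff h ρ < ((pBound w p : ℚ) : WithTop ℚ)) := by
  classical
  obtain ⟨⟨hdecomp, -⟩, -⟩ := hgood
  set vh := w.gauss h with hvh
  set B := pBound w p with hBdef
  have hWh : w.W h = ((vh : ℚ) : WithTop ℚ) := by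
    rw [← AddVal.W_gaussT, AddVal.gaussT, if_neg hh]
  have hp' : (0 : ℚ) < (p : ℚ) := by exact_mod_cast hp.pos
  have hp1 : (1 : ℚ) < (p : ℚ) := by exact_mod_cast hp.one_lt
  have hB : 0 < B := by
    rw [hBdef, pBound]
    exact div_pos (mul_pos hp' hvp) (by linarith)
  have hδ0 : δ ≠ 0 := by
    intro h0
    rw [h0, zero_pow hp.ne_zero] at hδ
    exact hγ hδ.symm
  have hvδ : w.v δ = w.v γ / (p : ℚ) := by
    have hv : w.vv (δ ^ p) = w.vv γ := by rw [hδ]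
    rw [AddVal.vv_pow, AddVal.vv_of_ne w hδ0, AddVal.coe_nsmul, AddVal.vv_of_ne w hγ] at hv
    have h2 : (p : ℚ) * w.v δ = w.v γ := by exact_mod_cast hv
    field_simp
    linarith
  have hζ1 : (1 : K) - ζ ≠ 0 := sub_ne_zero_of_ne (hζ.ne_one hp.one_lt).symm
  have hsc : (1 - ζ) * δ⁻¹ ≠ 0 := mul_ne_zero hζ1 (inv_ne_zero hδ0)
  have hvsc : w.v ((1 - ζ) * δ⁻¹) = B / (p : ℚ) - w.v γ / (p : ℚ) := by
    rw [w.map_mul _ _ hζ1 (inv_ne_zero hδ0), AddVal.vv_inv w hδ0,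
      AddVal.v_one_sub_zeta w hp hζ, hvδ, hBdef, pBound]
    have hne : (p : ℚ) - 1 ≠ 0 := by linarith
    field_simp
    ring
  have hWq0 : w.W (C ((1 - ζ) * δ⁻¹) * q)
      = ((B / (p : ℚ) - w.v γ / (p : ℚ) : ℚ) : WithTop ℚ) + w.W q := by
    rw [AddVal.W_mul, AddVal.W_C, AddVal.vv_of_ne w hsc, hvsc]
  have hWρ0 : w.W (C γ⁻¹ * ρ) = ((-w.v γ : ℚ) : WithTop ℚ) + w.W ρ := by
    rw [AddVal.W_mul, AddVal.W_C, AddVal.vv_of_ne w (inv_ne_zero hγ), AddVal.vv_inv w hγ]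
  -- ρ part
  have hρparts : (0 : WithTop ℚ) ≤ w.W (C γ⁻¹ * ρ) ∧
      ((0 : WithTop ℚ) < w.W (C γ⁻¹ * ρ) ↔ ((B : ℚ) : WithTop ℚ) < w.tdiff h ρ) := by
    by_cases hρ : ρ = 0
    · rw [AddVal.tdiff, if_pos hρ, hρ, mul_zero, AddVal.W_zero]
      refine ⟨le_top, ?_, ?_⟩
      · intro _
        exact WithTop.coe_lt_top B
      · intro _
        exact WithTop.coe_lt_top 0
    · have hgρ : w.W ρ = ((w.gauss ρ : ℚ) : WithTop ℚ) := by
        rw [← AddVal.W_gaussT, AddVal.gaussT, if_neg hρ]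
      have htd : w.tdiff h ρ = ((w.gauss ρ - vh : ℚ) : WithTop ℚ) := by
        rw [AddVal.tdiff, if_neg hρ]
      have ht0' := ht0
      rw [htd] at ht0'
      have ht' : (0 : ℚ) ≤ w.gauss ρ - vh := by exact_mod_cast ht0'
      have hvγ' : w.v γ = min (w.gauss ρ - vh) B + vh := by rw [hvγ, if_neg hρ]
      obtain ⟨r1, r2⟩ := AddVal.rarith (B := B) (vh := vh) (g := w.gauss ρ) ht'
      rw [hWρ0, hgρ, ← WithTop.coe_add, hvγ', htd]
      exact ⟨by exact_mod_cast r1, by exact_mod_cast r2⟩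
  -- q part
  have hqparts : (0 : WithTop ℚ) ≤ w.W (C ((1 - ζ) * δ⁻¹) * q) ∧
      ((0 : WithTop ℚ) < w.W (C ((1 - ζ) * δ⁻¹) * q) ↔
        w.tdiff h ρ < ((B : ℚ) : WithTop ℚ)) := by
    by_cases hq : q = 0
    · have hρh : ρ = h := by rw [hdecomp, hq, zero_pow hp.ne_zero, zero_add]
      have hρ0 : ρ ≠ 0 := by rw [hρh]; exact hh
      have htd : w.tdiff h ρ = (((0 : ℚ)) : WithTop ℚ) := by
        rw [AddVal.tdiff, if_neg hρ0, hρh]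
        norm_num
      rw [hq, mul_zero, AddVal.W_zero, htd]
      refine ⟨le_top, ?_, ?_⟩
      · intro _
        exact_mod_cast hB
      · intro _
        exact WithTop.coe_lt_top 0
    · have hgq : w.W q = ((w.gauss q : ℚ) : WithTop ℚ) := by
        rw [← AddVal.W_gaussT, AddVal.gaussT, if_neg hq]
      set a := w.gauss q with ha
      have hWqp : w.W (q ^ p) = (((p : ℚ) * a : ℚ) : WithTop ℚ) := by
        rw [AddVal.W_pow, hgq, AddVal.coe_nsmul]
      by_cases hρ : ρ = 0
      · have hqph : h = q ^ p := by rw [hdecomp, hρ, add_zero]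
        have hpa : (p : ℚ) * a = vh := by
          have h2 : w.W h = w.W (q ^ p) := by rw [← hqph]
          rw [hWh, hWqp] at h2
          exact_mod_cast h2.symm
        have hvγ' : w.v γ = B + vh := by rw [hvγ, if_pos hρ]
        have hval : B / (p : ℚ) - w.v γ / (p : ℚ) + a = 0 := by
          rw [hvγ']
          field_simp
          linarith
        rw [hWq0, hgq, ← WithTop.coe_add, hval, AddVal.tdiff, if_pos hρ]
        refine ⟨by exact_mod_cast le_refl (0 : ℚ), ?_, ?_⟩
        · intro hc
          exact absurd hc (by exact_mod_cast lt_irrefl (0 : ℚ))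
        · intro hc
          exact absurd hc (not_lt.mpr le_top)
      · have hgρ : w.W ρ = ((w.gauss ρ : ℚ) : WithTop ℚ) := by
          rw [← AddVal.W_gaussT, AddVal.gaussT, if_neg hρ]
        have htd : w.tdiff h ρ = ((w.gauss ρ - vh : ℚ) : WithTop ℚ) := by
          rw [AddVal.tdiff, if_neg hρ]
        have ht0' := ht0
        rw [htd] at ht0'
        have ht' : (0 : ℚ) ≤ w.gauss ρ - vh := by exact_mod_cast ht0'
        have hvγ' : w.v γ = min (w.gauss ρ - vh) B + vh := by rw [hvγ, if_neg hρ]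
        have hK1 : vh ≤ (p : ℚ) * a := by
          by_contra hlt
          push_neg at hlt
          have hlt2 : w.W (q ^ p) < w.W ρ := by
            rw [hWqp, hgρ]
            exact_mod_cast lt_of_lt_of_le hlt (by linarith)
          have heq := AddVal.W_add_eq_left w hlt2
          rw [← hdecomp, hWh, hWqp] at heq
          have : vh = (p : ℚ) * a := by exact_mod_cast heq
          linarith
        have hK2 : 0 < w.gauss ρ - vh → (p : ℚ) * a = vh := by
          intro hpos
          have hqp : q ^ p = h + (-ρ) := by rw [hdecomp]; ring
          have hlt : w.W h < w.W (-ρ) := by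
            rw [AddVal.W_neg, hWh, hgρ]
            exact_mod_cast (by linarith : vh < w.gauss ρ)
          have heq := AddVal.W_add_eq_left w hlt
          rw [← hqp, hWqp, hWh] at heq
          exact_mod_cast heq
        obtain ⟨r1, r2⟩ := AddVal.qarith (pq := (p : ℚ)) (B := B) (vh := vh)
          (g := w.gauss ρ) (a := a) hp' hB ht' hK1 hK2
        rw [hWq0, hgq, ← WithTop.coe_add, hvγ', htd]
        exact ⟨by exact_mod_cast r1, by exact_mod_cast r2⟩
  refine ⟨?_, ?_, ?_, ?_⟩
  · rw [AddVal.W_gaussT]; exact hqparts.1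
  · rw [AddVal.W_gaussT]; exact hρparts.1
  · rw [AddVal.W_gaussT]; exact hρparts.2
  · rw [AddVal.W_gaussT]; exact hqparts.2
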